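/- Let A be a C*-algebra, X a semi-inner product A-module, n a natural number, and x_1, ..., x_n elements of X. Then the Gram matrix [⟨x_i, x_j⟩]_{i,j=1}^n is a positive element of the C*-algebra M_n(A) of n×n matrices over A. -/

import Mathlib

/-- A semi-inner product `A`-module: a right `A`-module `X` (which is also a complex
vector space, with compatible actions) together with an `A`-valued semi-inner product. -/
structure SemiInnerProductModule (A : Type*) (X : Type*)
    [NonUnitalCStarAlgebra A] [PartialOrder A] [StarOrderedRing A]
    [AddCommGroup X] [Module ℂ X] where
  /-- the right action of `A` on `X` -/
  rsmul : X → A → X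
  /-- the `A`-valued semi-inner product -/
  inner : X → X → A
  add_rsmul : ∀ (x y : X) (a : A), rsmul (x + y) a = rsmul x a + rsmul y a
  rsmul_add : ∀ (x : X) (a b : A), rsmul x (a + b) = rsmul x a + rsmul x b
  rsmul_mul : ∀ (x : X) (a b : A), rsmul (rsmul x a) b = rsmul x (a * b)
  smul_rsmul : ∀ (c : ℂ) (x : X) (a : A), rsmul (c • x) a = c • rsmul x a
  rsmul_smul : ∀ (c : ℂ) (x : X) (a : A), rsmul x (c • a) = c • rsmul x a
  inner_add : ∀ (x y z : X), inner x (y + z) = inner x y + inner x z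
  inner_smul : ∀ (c : ℂ) (x y : X), inner x (c • y) = c • inner x y
  inner_rsmul : ∀ (x y : X) (a : A), inner x (rsmul y a) = inner x y * a
  star_inner : ∀ (x y : X), star (inner x y) = inner y x
  inner_self_nonneg : ∀ x : X, 0 ≤ inner x x

/-- Positivity of a matrix as an element of the C⋆-algebra `Mₙ(A)`:
a matrix is positive iff it is of the form `bᴴ * b`. -/
def Matrix.IsPosElem {A : Type*} {n : ℕ} [NonUnitalCStarAlgebra A]
    (M : Matrix (Fin n) (Fin n) A) : Prop :=
  ∃ b : Matrix (Fin n) (Fin n) A, M = b.conjTranspose * b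


open scoped ComplexOrder InnerProductSpace

set_option linter.unusedSectionVars false
set_option maxHeartbeats 1600000

namespace GramAux

variable {A : Type*} [NonUnitalCStarAlgebra A] [PartialOrder A] [StarOrderedRing A] {n : ℕ}

open WithCStarModule CStarModule

/-- matrix action on the standard module -/
noncomputable def mulVecCLM (M : Matrix (Fin n) (Fin n) A) :
    WithCStarModule A (Fin n → A) →L[ℂ] WithCStarModule A (Fin n → A) :=
  LinearMap.mkContinuous
    { toFun := fun v => (equiv A _).symm fun i => ∑ j, v j * star (M i j)
      map_add' := fun v w => by
        ext i
        simp [WithCStarModule.equiv_symm_pi_apply, WithCStarModule.add_apply, add_mul,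
          Finset.sum_add_distrib]
      map_smul' := fun c v => by
        ext i
        simp [WithCStarModule.equiv_symm_pi_apply, WithCStarModule.smul_apply, smul_mul_assoc,
          Finset.smul_sum] }
    (∑ i, ∑ j, ‖M i j‖)
    (by
      intro v
      simp only [LinearMap.coe_mk, AddHom.coe_mk]
      calc ‖(equiv A (Fin n → A)).symm fun i => ∑ j, v j * star (M i j)‖
          ≤ ∑ i, ‖∑ j, v j * star (M i j)‖ := by
            simpa using pi_norm_le_sum_norm ((equiv A (Fin n → A)).symm fun i => ∑ j, v j * star (M i j))
        _ ≤ ∑ i, ∑ j, ‖M i j‖ * ‖v‖ := by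
            refine Finset.sum_le_sum fun i _ => (norm_sum_le _ _).trans ?_
            refine Finset.sum_le_sum fun j _ => (norm_mul_le _ _).trans ?_
            rw [norm_star, mul_comm]
            exact mul_le_mul_of_nonneg_left (norm_apply_le_norm v j) (norm_nonneg _)
        _ = (∑ i, ∑ j, ‖M i j‖) * ‖v‖ := by rw [Finset.sum_mul]; simp [Finset.sum_mul])

@[simp] lemma mulVecCLM_apply (M : Matrix (Fin n) (Fin n) A) (v : WithCStarModule A (Fin n → A))
    (i : Fin n) : mulVecCLM M v i = ∑ j, v j * star (M i j) := by
  simp [mulVecCLM, LinearMap.mkContinuous_apply, WithCStarModule.equiv_symm_pi_apply]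

lemma mulVecCLM_norm_le (M : Matrix (Fin n) (Fin n) A) :
    ‖mulVecCLM M‖ ≤ ∑ i, ∑ j, ‖M i j‖ :=
  LinearMap.mkContinuous_norm_le _ (by positivity) _

lemma mulVecCLM_single (M : Matrix (Fin n) (Fin n) A) (j : Fin n) (a : A) (i : Fin n) :
    (mulVecCLM M ((equiv A _).symm (Pi.single j a))) i = a * star (M i j) := by
  rw [mulVecCLM_apply]
  rw [Finset.sum_eq_single j]
  · simp [WithCStarModule.equiv_symm_pi_apply]
  · intro k _ hk
    simp [WithCStarModule.equiv_symm_pi_apply, Pi.single_eq_of_ne hk]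
  · simp

lemma entry_norm_le (M : Matrix (Fin n) (Fin n) A) (i j : Fin n) :
    ‖M i j‖ ≤ ‖mulVecCLM M‖ := by
  rcases eq_or_ne (M i j) 0 with h | h
  · simp only [h, norm_zero]; positivity
  · set a := M i j with ha
    set v : WithCStarModule A (Fin n → A) := (equiv A _).symm (Pi.single j a) with hv
    have hnv : ‖v‖ = ‖M i j‖ := by rw [hv, norm_single]
    have h1 : ‖a * star (M i j)‖ ≤ ‖mulVecCLM M v‖ := by
      rw [← mulVecCLM_single M j a i]
      exact norm_apply_le_norm _ i
    have h2 : ‖a * star (M i j)‖ = ‖M i j‖ * ‖M i j‖ := by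
      rw [ha]; exact CStarRing.norm_self_mul_star
    have h3 : ‖mulVecCLM M v‖ ≤ ‖mulVecCLM M‖ * ‖M i j‖ := by
      simpa [hnv] using (mulVecCLM M).le_opNorm v
    have := h1.trans h3
    rw [h2] at this
    exact le_of_mul_le_mul_right this (by simpa using norm_pos_iff.mpr h)

lemma mulVecCLM_mul (M N : Matrix (Fin n) (Fin n) A) :
    mulVecCLM (M * N) = (mulVecCLM M).comp (mulVecCLM N) := by
  ext v i
  simp only [mulVecCLM_apply, ContinuousLinearMap.comp_apply, Matrix.mul_apply,
    Finset.sum_mul, Finset.mul_sum]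
  rw [Finset.sum_comm]
  simp [mul_assoc, Finset.mul_sum, star_sum, Finset.sum_mul]

lemma mulVecCLM_injective :
    Function.Injective (mulVecCLM : Matrix (Fin n) (Fin n) A → _) := by
  intro M N h
  ext i j
  have hsub : mulVecCLM (M - N) = mulVecCLM M - mulVecCLM N := by
    ext v i
    simp [mulVecCLM_apply, Matrix.sub_apply, sub_mul, Finset.sum_sub_distrib,
      WithCStarModule.sub_apply, mul_sub]
  have h0 : mulVecCLM (M - N) = 0 := by rw [hsub, h]; exact sub_self (mulVecCLM N)
  have hb : ‖(M - N) i j‖ ≤ ‖mulVecCLM (M - N)‖ := entry_norm_le (M - N) i j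
  rw [h0] at hb
  have hb' : ‖(M - N) i j‖ ≤ 0 := by rwa [ContinuousLinearMap.opNorm_zero] at hb
  have : ‖(M - N) i j‖ = 0 := le_antisymm hb' (norm_nonneg _)
  rw [norm_eq_zero] at this
  have := sub_eq_zero.mp (by simpa [Matrix.sub_apply] using this)
  exact this

/-- the adjoint identity -/
lemma inner_mulVecCLM (M : Matrix (Fin n) (Fin n) A) (v w : WithCStarModule A (Fin n → A)) :
    ⟪mulVecCLM M v, w⟫_A = ⟪v, mulVecCLM M.conjTranspose w⟫_A := by
  simp only [pi_inner, WithCStarModule.inner_def, mulVecCLM_apply]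
  simp only [star_sum, Finset.sum_mul, star_mul, Matrix.conjTranspose_apply, Finset.mul_sum]
  rw [Finset.sum_comm]
  refine Finset.sum_congr rfl fun j _ => Finset.sum_congr rfl fun i _ => by
    simp [mul_assoc]

structure Mat (n : ℕ) (A : Type*) where
  toMatrix : Matrix (Fin n) (Fin n) A

namespace Mat

@[ext] lemma ext {M N : Mat n A} (h : M.toMatrix = N.toMatrix) : M = N := by
  cases M; cases N; simpa using h

instance : Zero (Mat n A) := ⟨⟨0⟩⟩
instance : Add (Mat n A) := ⟨fun M N => ⟨M.toMatrix + N.toMatrix⟩⟩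
instance : Neg (Mat n A) := ⟨fun M => ⟨-M.toMatrix⟩⟩
instance : Sub (Mat n A) := ⟨fun M N => ⟨M.toMatrix - N.toMatrix⟩⟩
instance : Mul (Mat n A) := ⟨fun M N => ⟨M.toMatrix * N.toMatrix⟩⟩
instance : SMul ℕ (Mat n A) := ⟨fun c M => ⟨c • M.toMatrix⟩⟩
instance : SMul ℤ (Mat n A) := ⟨fun c M => ⟨c • M.toMatrix⟩⟩
instance : SMul ℂ (Mat n A) := ⟨fun c M => ⟨c • M.toMatrix⟩⟩
instance : Star (Mat n A) := ⟨fun M => ⟨M.toMatrix.conjTranspose⟩⟩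

@[simp] lemma toMatrix_zero : (0 : Mat n A).toMatrix = 0 := rfl
@[simp] lemma toMatrix_add (M N : Mat n A) : (M + N).toMatrix = M.toMatrix + N.toMatrix := rfl
@[simp] lemma toMatrix_neg (M : Mat n A) : (-M).toMatrix = -M.toMatrix := rfl
@[simp] lemma toMatrix_sub (M N : Mat n A) : (M - N).toMatrix = M.toMatrix - N.toMatrix := rfl
@[simp] lemma toMatrix_mul (M N : Mat n A) : (M * N).toMatrix = M.toMatrix * N.toMatrix := rfl
@[simp] lemma toMatrix_smul (c : ℂ) (M : Mat n A) : (c • M).toMatrix = c • M.toMatrix := rfl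
@[simp] lemma toMatrix_star (M : Mat n A) : (star M).toMatrix = M.toMatrix.conjTranspose := rfl

lemma toMatrix_injective : Function.Injective (toMatrix : Mat n A → Matrix (Fin n) (Fin n) A) :=
  fun _ _ h => ext h

instance : AddCommGroup (Mat n A) :=
  toMatrix_injective.addCommGroup _ rfl (fun _ _ => rfl) (fun _ => rfl) (fun _ _ => rfl)
    (fun _ _ => rfl) (fun _ _ => rfl)

instance : NonUnitalRing (Mat n A) :=
  toMatrix_injective.nonUnitalRing _ rfl (fun _ _ => rfl) (fun _ _ => rfl) (fun _ => rfl)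
    (fun _ _ => rfl) (fun _ _ => rfl) (fun _ _ => rfl)

instance : Module ℂ (Mat n A) :=
  toMatrix_injective.module ℂ
    { toFun := toMatrix, map_zero' := rfl, map_add' := fun _ _ => rfl }
    (fun _ _ => rfl)

instance : StarRing (Mat n A) where
  star_involutive M := by ext1; simp
  star_add M N := by ext1; simp [Matrix.conjTranspose_add]
  star_mul M N := by ext1; simp [Matrix.conjTranspose_mul]

instance : StarModule ℂ (Mat n A) where
  star_smul c M := by ext1; simp [Matrix.conjTranspose_smul]

instance : SMulCommClass ℂ (Mat n A) (Mat n A) where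
  smul_comm c M N := by ext1; simp [Matrix.mul_smul]

instance : IsScalarTower ℂ (Mat n A) (Mat n A) where
  smul_assoc c M N := by ext1; simp [Matrix.smul_mul]

end Mat

namespace Mat

/-- the action of a matrix on the standard module, as a non-unital ring hom -/
noncomputable def opHom : Mat n A →ₙ+* (WithCStarModule A (Fin n → A) →L[ℂ] WithCStarModule A (Fin n → A)) where
  toFun M := mulVecCLM M.toMatrix
  map_zero' := by
    ext v i
    simp
  map_add' M N := by
    ext v i
    simp [Matrix.add_apply, add_mul, Finset.sum_add_distrib, WithCStarModule.add_apply, mul_add]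
  map_mul' M N := by
    show mulVecCLM ((M * N).toMatrix) = _
    rw [toMatrix_mul, mulVecCLM_mul]
    rfl

@[simp] lemma opHom_apply (M : Mat n A) : opHom M = mulVecCLM M.toMatrix := rfl

lemma opHom_injective : Function.Injective (opHom : Mat n A → _) := by
  intro M N h
  exact toMatrix_injective (mulVecCLM_injective h)

noncomputable instance : NonUnitalNormedRing (Mat n A) :=
  NonUnitalNormedRing.induced _ _ (opHom : Mat n A →ₙ+* _) opHom_injective

lemma norm_def (M : Mat n A) : ‖M‖ = ‖mulVecCLM M.toMatrix‖ := rfl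

lemma mulVecCLM_smul (c : ℂ) (M : Matrix (Fin n) (Fin n) A) :
    mulVecCLM (c • M) = starRingEnd ℂ c • mulVecCLM M := by
  ext v i
  simp [Matrix.smul_apply, smul_mul_assoc, Finset.smul_sum, WithCStarModule.smul_apply,
    mul_smul_comm]

noncomputable instance : NormedSpace ℂ (Mat n A) where
  norm_smul_le c M := by
    rw [norm_def, norm_def, toMatrix_smul, mulVecCLM_smul]
    exact (ContinuousLinearMap.opNorm_smul_le _ _).trans (by simp)

lemma norm_entry_le_norm (M : Mat n A) (i j : Fin n) : ‖M.toMatrix i j‖ ≤ ‖M‖ :=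
  entry_norm_le _ i j

lemma norm_le_sum_norm_entries (M : Mat n A) : ‖M‖ ≤ ∑ i, ∑ j, ‖M.toMatrix i j‖ :=
  mulVecCLM_norm_le _

instance : CStarRing (Mat n A) where
  norm_mul_self_le x := by
    set s : ℝ := ‖star x * x‖ with hs
    have hs0 : 0 ≤ s := norm_nonneg _
    have key : ∀ v : WithCStarModule A (Fin n → A),
        ‖mulVecCLM x.toMatrix v‖ ≤ Real.sqrt s * ‖v‖ := by
      intro v
      have h1 : ‖mulVecCLM x.toMatrix v‖ ^ 2 ≤ s * ‖v‖ ^ 2 := by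
        calc ‖mulVecCLM x.toMatrix v‖ ^ 2
            = ‖⟪mulVecCLM x.toMatrix v, mulVecCLM x.toMatrix v⟫_A‖ := norm_sq_eq A
          _ = ‖⟪v, mulVecCLM (star x * x).toMatrix v⟫_A‖ := by
              rw [inner_mulVecCLM]
              congr 2
              rw [toMatrix_mul, mulVecCLM_mul]
              rfl
          _ ≤ ‖v‖ * ‖mulVecCLM (star x * x).toMatrix v‖ := norm_inner_le _
          _ ≤ ‖v‖ * (s * ‖v‖) := by
              refine mul_le_mul_of_nonneg_left ?_ (norm_nonneg v)
              simpa [hs, norm_def] using (mulVecCLM (star x * x).toMatrix).le_opNorm v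
          _ = s * ‖v‖ ^ 2 := by ring
      have h2 : ‖mulVecCLM x.toMatrix v‖ = Real.sqrt (‖mulVecCLM x.toMatrix v‖ ^ 2) := by
        rw [Real.sqrt_sq (norm_nonneg _)]
      rw [h2]
      calc Real.sqrt (‖mulVecCLM x.toMatrix v‖ ^ 2) ≤ Real.sqrt (s * ‖v‖ ^ 2) :=
            Real.sqrt_le_sqrt h1
        _ = Real.sqrt s * ‖v‖ := by
            rw [Real.sqrt_mul hs0, Real.sqrt_sq (norm_nonneg _)]
    have hxle : ‖x‖ ≤ Real.sqrt s := by
      rw [norm_def]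
      exact ContinuousLinearMap.opNorm_le_bound _ (Real.sqrt_nonneg _) key
    calc ‖x‖ * ‖x‖ ≤ Real.sqrt s * Real.sqrt s :=
          mul_le_mul hxle hxle (norm_nonneg _) (Real.sqrt_nonneg _)
      _ = s := Real.mul_self_sqrt hs0

/-- the entry map as an additive monoid hom -/
def entryHom (i j : Fin n) : Mat n A →+ A :=
  AddMonoidHom.mk' (fun M => M.toMatrix i j) (fun _ _ => rfl)

instance : CompleteSpace (Mat n A) := by
  refine Metric.complete_of_cauchySeq_tendsto fun u hu => ?_
  have hC : ∀ i j, CauchySeq fun k => (u k).toMatrix i j := by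
    intro i j
    have hlip : LipschitzWith (Real.toNNReal 1) ((entryHom (A := A) i j : Mat n A →+ A) : Mat n A → A) :=
      AddMonoidHomClass.lipschitz_of_bound (entryHom (A := A) i j) 1
        (fun M => by
          show ‖M.toMatrix i j‖ ≤ 1 * ‖M‖
          rw [one_mul]
          exact norm_entry_le_norm M i j)
    exact (hlip.uniformContinuous.comp_cauchySeq hu)
  have hl : ∀ i j, ∃ a : A, Filter.Tendsto (fun k => (u k).toMatrix i j) Filter.atTop (nhds a) :=
    fun i j => cauchySeq_tendsto_of_complete (hC i j)
  choose l hl using hl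
  refine ⟨⟨Matrix.of l⟩, ?_⟩
  rw [tendsto_iff_norm_sub_tendsto_zero]
  have hbound : ∀ k, ‖u k - ⟨Matrix.of l⟩‖ ≤ ∑ i, ∑ j, ‖(u k).toMatrix i j - l i j‖ := by
    intro k
    calc ‖u k - ⟨Matrix.of l⟩‖ ≤ ∑ i, ∑ j, ‖(u k - ⟨Matrix.of l⟩).toMatrix i j‖ :=
          norm_le_sum_norm_entries _
      _ = ∑ i, ∑ j, ‖(u k).toMatrix i j - l i j‖ := by
          refine Finset.sum_congr rfl fun i _ => Finset.sum_congr rfl fun j _ => ?_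
          rw [toMatrix_sub, Matrix.sub_apply]
          rfl
  refine squeeze_zero (fun k => norm_nonneg _) hbound ?_
  have h0 : Filter.Tendsto (fun k => ∑ i, ∑ j, ‖(u k).toMatrix i j - l i j‖)
      Filter.atTop (nhds 0) := by
    have := tendsto_finset_sum (Finset.univ (α := Fin n)) fun i _ =>
      tendsto_finset_sum (Finset.univ (α := Fin n)) fun j _ =>
        tendsto_iff_norm_sub_tendsto_zero.mp (hl i j)
    simpa using this
  exact h0

noncomputable instance : NonUnitalCStarAlgebra (Mat n A) :=
  { (inferInstance : CompleteSpace (Mat n A)) with }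

/-- A selfadjoint element whose negative part vanishes pointwise-ish:
key lemma: if `g` is selfadjoint then there are selfadjoint `N, d` with
`N = cfcₙ negPart g` etc. We do everything inline in the main theorem. -/

lemma star_mul_self_entry (d : Mat n A) (k : Fin n) :
    (star d * d).toMatrix k k = ∑ i, star (d.toMatrix i k) * d.toMatrix i k := by
  rw [toMatrix_mul, Matrix.mul_apply]
  exact Finset.sum_congr rfl fun i _ => by rw [toMatrix_star, Matrix.conjTranspose_apply]

lemma sandwich_entry (c g : Mat n A) (hc : IsSelfAdjoint c) (k : Fin n) :
    (c * g * c).toMatrix k k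
      = ∑ i, ∑ j, star (c.toMatrix i k) * (g.toMatrix i j * c.toMatrix j k) := by
  have hcs : ∀ i j, c.toMatrix i j = star (c.toMatrix j i) := by
    intro i j
    conv_lhs => rw [← hc]
    rfl
  simp only [toMatrix_mul, Matrix.mul_apply, Finset.sum_mul]
  rw [Finset.sum_comm]
  refine Finset.sum_congr rfl fun i _ => Finset.sum_congr rfl fun j _ => ?_
  rw [hcs k i, mul_assoc]

/-- Main abstract factorization: a selfadjoint matrix whose "sandwich diagonals" are
nonnegative is of the form `star b * b`. -/
theorem exists_factor (g : Mat n A) (hg : IsSelfAdjoint g)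
    (hpos : ∀ v : Fin n → A,
      0 ≤ ∑ i, ∑ j, star (v i) * (g.toMatrix i j * v j)) :
    ∃ b : Mat n A, g = star b * b := by
  classical
  set np : ℝ → ℝ := fun t => max (-t) 0 with hnp
  have hnp_cont : Continuous np := by fun_prop
  have hnp0 : np 0 = 0 := by simp [hnp]
  set c : Mat n A := cfcₙ np g with hc
  have hc_sa : IsSelfAdjoint c := cfcₙ_predicate np g
  -- `c * g * c = -(c * c * c)`
  have e1 : c * g = cfcₙ (fun t => np t * t) g := by
    conv_lhs => rw [← cfcₙ_id ℝ g]
    exact (cfcₙ_mul _ _ g).symm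
  have e2 : c * g * c = cfcₙ (fun t => np t * t * np t) g := by
    rw [e1]
    exact (cfcₙ_mul _ _ g).symm
  have e3 : c * c * c = cfcₙ (fun t => np t * np t * np t) g := by
    have h : c * c = cfcₙ (fun t => np t * np t) g := (cfcₙ_mul _ _ g).symm
    rw [h]
    exact (cfcₙ_mul _ _ g).symm
  have hfun : (fun t => np t * t * np t) = fun t => -(np t * np t * np t) := by
    funext t
    rcases le_total 0 t with ht | ht
    · simp [hnp, max_eq_right (neg_nonpos.mpr ht)]
    · have h : np t = -t := max_eq_left (by simpa using ht)
      rw [h]; ring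
  have hcgc : c * g * c = -(c * c * c) := by
    rw [e2, hfun, e3, cfcₙ_neg]
  -- `c^3` is `star d * d`
  set f : ℝ → ℝ := fun t => Real.sqrt (np t) * np t with hf
  have hf_cont : Continuous f := by fun_prop
  set d : Mat n A := cfcₙ f g with hd
  have hd_sa : IsSelfAdjoint d := cfcₙ_predicate f g
  have hdd : d * d = c * c * c := by
    have h : d * d = cfcₙ (fun t => f t * f t) g := (cfcₙ_mul _ _ g).symm
    rw [h, e3]
    apply cfcₙ_congr
    intro t _
    have h0 : 0 ≤ np t := le_max_right _ _
    show f t * f t = np t * np t * np t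
    rw [hf]
    have : Real.sqrt (np t) * np t * (Real.sqrt (np t) * np t)
        = (Real.sqrt (np t) * Real.sqrt (np t)) * (np t * np t) := by ring
    rw [this, Real.mul_self_sqrt h0]
    ring
  -- each diagonal entry of `c^3` vanishes
  have hdiag : ∀ k, (c * c * c).toMatrix k k = 0 := by
    intro k
    have h1 : 0 ≤ (c * g * c).toMatrix k k := by
      rw [sandwich_entry c g hc_sa k]
      exact hpos fun i => c.toMatrix i k
    have h2 : (c * g * c).toMatrix k k = -((c * c * c).toMatrix k k) := by
      rw [hcgc]; rfl
    have hle : (c * c * c).toMatrix k k ≤ 0 := by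
      rw [h2] at h1
      exact neg_nonneg.mp h1
    have hge : 0 ≤ (c * c * c).toMatrix k k := by
      have hsd : c * c * c = star d * d := by rw [hd_sa.star_eq, hdd]
      rw [hsd, star_mul_self_entry d k]
      exact Finset.sum_nonneg fun i _ => star_mul_self_nonneg _
    exact le_antisymm hle hge
  -- hence `d = 0` and `c^3 = 0`
  have hd0 : d = 0 := by
    ext1
    ext i k
    have h1 : ∑ i, star (d.toMatrix i k) * d.toMatrix i k = 0 := by
      rw [← star_mul_self_entry d k, hd_sa.star_eq, hdd]
      exact hdiag k
    have h2 := (Finset.sum_eq_zero_iff_of_nonneg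
      (fun i _ => star_mul_self_nonneg (d.toMatrix i k))).mp h1 i (Finset.mem_univ i)
    have h3 := CStarRing.star_mul_self_eq_zero_iff (d.toMatrix i k) |>.mp h2
    simpa using h3
  have hc3 : c * c * c = 0 := by rw [← hdd, hd0, mul_zero]
  -- hence `c = 0`
  have hcc_sa : star (c * c) = c * c := by rw [star_mul, hc_sa.star_eq]
  have hcc0 : c * c = 0 := by
    have h4 : (c * c) * (c * c) = 0 := by
      have h : (c * c) * (c * c) = (c * c * c) * c := (mul_assoc (c * c) c c).symm
      rw [h, hc3, zero_mul]
    have h5 := CStarRing.norm_star_mul_self (x := c * c)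
    rw [hcc_sa, h4, norm_zero] at h5
    exact norm_eq_zero.mp <| (mul_self_eq_zero (a := ‖c * c‖)).mp h5.symm
  have hc0 : c = 0 := by
    have h5 := CStarRing.norm_star_mul_self (x := c)
    rw [hc_sa.star_eq, hcc0, norm_zero] at h5
    exact norm_eq_zero.mp <| (mul_self_eq_zero (a := ‖c‖)).mp h5.symm
  -- now take the square root of the positive part
  set r : ℝ → ℝ := fun t => Real.sqrt (max t 0) with hr
  have hr_cont : Continuous r := by fun_prop
  refine ⟨cfcₙ r g, ?_⟩
  have hb_sa : IsSelfAdjoint (cfcₙ r g) := cfcₙ_predicate r g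
  rw [hb_sa.star_eq]
  have hbb : cfcₙ r g * cfcₙ r g = cfcₙ (fun t : ℝ => max t 0) g := by
    have hr0 : r 0 = 0 := by simp [hr]
    have h : cfcₙ r g * cfcₙ r g = cfcₙ (fun t => r t * r t) g :=
      (cfcₙ_mul r r g hr_cont.continuousOn hr0 hr_cont.continuousOn hr0).symm
    rw [h]
    apply cfcₙ_congr
    intro t _
    show r t * r t = max t 0
    rw [hr]
    exact Real.mul_self_sqrt (le_max_right _ _)
  have hsplit : cfcₙ (fun t : ℝ => max t 0) g = g + c := by
    have hfun2 : (fun t : ℝ => max t 0) = fun t => t + np t := by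
      funext t
      rcases le_total 0 t with ht | ht
      · rw [max_eq_left ht, hnp]
        simp [max_eq_right (neg_nonpos.mpr ht)]
      · rw [max_eq_right ht, hnp]
        simp [max_eq_left (neg_nonneg.mpr ht)]
    have hadd : cfcₙ (fun t : ℝ => t + np t) g = cfcₙ (fun t : ℝ => t) g + cfcₙ np g :=
      cfcₙ_add (fun t : ℝ => t) np g continuous_id.continuousOn rfl hnp_cont.continuousOn hnp0
    rw [hfun2, hadd, cfcₙ_id' ℝ g]
  rw [hbb, hsplit, hc0, add_zero]

end Mat

end GramAux

namespace GramAux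

variable {A : Type*} [NonUnitalCStarAlgebra A] [PartialOrder A] [StarOrderedRing A] {n : ℕ}

set_option linter.unusedSectionVars false in
/-- positivity of the Gram "sandwich" sums, from the semi-inner-product axioms -/
theorem gram_sum_nonneg {X : Type*} [AddCommGroup X] [Module ℂ X]
    (P : SemiInnerProductModule A X) (x : Fin n → X) (v : Fin n → A) :
    0 ≤ ∑ i, ∑ j, star (v i) * (P.inner (x i) (x j) * v j) := by
  classical
  have h_add_left : ∀ y z w : X, P.inner (y + z) w = P.inner y w + P.inner z w := by
    intro y z w
    rw [← P.star_inner, P.inner_add, star_add, P.star_inner, P.star_inner]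
  have h_zero_left : ∀ w : X, P.inner 0 w = 0 := by
    intro w
    have h := h_add_left 0 0 w
    rw [add_zero] at h
    exact (left_eq_add.mp h)
  have h_sum_left : ∀ (f : Fin n → X) (w : X),
      P.inner (∑ i, f i) w = ∑ i, P.inner (f i) w := by
    intro f w
    induction (Finset.univ : Finset (Fin n)) using Finset.cons_induction with
    | empty => simpa using h_zero_left w
    | cons i s hi ih => rw [Finset.sum_cons, h_add_left, ih, Finset.sum_cons]
  have h_zero_right : ∀ w : X, P.inner w 0 = 0 := by
    intro w
    have h := P.inner_add w 0 0
    rw [add_zero] at h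
    exact (left_eq_add.mp h)
  have h_sum_right : ∀ (w : X) (f : Fin n → X),
      P.inner w (∑ i, f i) = ∑ i, P.inner w (f i) := by
    intro w f
    induction (Finset.univ : Finset (Fin n)) using Finset.cons_induction with
    | empty => simpa using h_zero_right w
    | cons i s hi ih => rw [Finset.sum_cons, P.inner_add, ih, Finset.sum_cons]
  have h_rsmul_left : ∀ (y z : X) (a : A),
      P.inner (P.rsmul y a) z = star a * P.inner y z := by
    intro y z a
    rw [← P.star_inner, P.inner_rsmul, star_mul, P.star_inner]
  set y : X := ∑ i, P.rsmul (x i) (v i) with hy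
  have key : P.inner y y = ∑ i, ∑ j, star (v i) * (P.inner (x i) (x j) * v j) := by
    rw [hy, h_sum_left]
    refine Finset.sum_congr rfl fun i _ => ?_
    rw [h_rsmul_left, h_sum_right, Finset.mul_sum]
    refine Finset.sum_congr rfl fun j _ => ?_
    rw [P.inner_rsmul]
  rw [← key]
  exact P.inner_self_nonneg y

end GramAux

/-- The Gram matrix `[⟨xᵢ, xⱼ⟩]` of finitely many elements of a semi-inner product
`A`-module is a positive element of `Mₙ(A)`. -/
theorem gram_matrix_isPosElem {A X : Type*}
    [NonUnitalCStarAlgebra A] [PartialOrder A] [StarOrderedRing A]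
    [AddCommGroup X] [Module ℂ X]
    (P : SemiInnerProductModule A X) (n : ℕ) (x : Fin n → X) :
    Matrix.IsPosElem (Matrix.of fun i j => P.inner (x i) (x j)) := by
  classical
  set G : GramAux.Mat n A := ⟨Matrix.of fun i j => P.inner (x i) (x j)⟩ with hG
  have hsa : IsSelfAdjoint G := by
    apply GramAux.Mat.ext
    ext i j
    show star ((Matrix.of fun i j => P.inner (x i) (x j)) j i) = _
    simp only [Matrix.of_apply]
    exact P.star_inner (x j) (x i)
  have hpos : ∀ v : Fin n → A,
      0 ≤ ∑ i, ∑ j, star (v i) * (G.toMatrix i j * v j) := by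
    intro v
    simpa [hG] using GramAux.gram_sum_nonneg P x v
  obtain ⟨b, hb⟩ := GramAux.Mat.exists_factor G hsa hpos
  exact ⟨b.toMatrix, congrArg GramAux.Mat.toMatrix hb⟩
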